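/- Let (X, μ) be a measurable space with finite measure μ, let q ∈ (1, ∞), and let φ : X → (0, ∞) be a measurable function. Define I(φ, q) = inf ∫_X φ · α^q dμ, where the infimum is taken over all measurable functions α : X → [0, ∞] with ∫_X α dμ = 1. Then I(φ, q) = (∫_X φ^{-λ} dμ)^{-1/λ}, where λ = 1/(q-1), and the infimum is attained at ρ = (∫_X φ^{1/(1-q)} dμ)^{-1} · φ^{1/(1-q)}. -/

import Mathlib

open MeasureTheory ENNReal

lemma aux_lintegral_ne_zero {X : Type*} [MeasurableSpace X] (μ : Measure X) (hμ : μ ≠ 0)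
    (f : X → ℝ≥0∞) (hm : Measurable f) (hf : ∀ x, f x ≠ 0) : ∫⁻ x, f x ∂μ ≠ 0 := by
  intro h0
  rw [lintegral_eq_zero_iff hm] at h0
  have h1 : ∀ᵐ x ∂μ, False := h0.mono fun x hx => (hf x) hx
  exact hμ (ae_eq_bot.1 (Filter.eventually_false_iff_eq_bot.1 h1))

theorem inf_weighted_integral {X : Type*} [MeasurableSpace X] (μ : Measure X)
    [IsFiniteMeasure μ] (hμ : μ ≠ 0) (q : ℝ) (hq : 1 < q)
    (φ : X → ℝ≥0∞) (hφm : Measurable φ) (hφ : ∀ x, φ x ≠ 0 ∧ φ x ≠ ⊤) :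
    (⨅ (α : X → ℝ≥0∞) (_ : Measurable α ∧ ∫⁻ x, α x ∂μ = 1),
        ∫⁻ x, φ x * α x ^ q ∂μ)
      = (∫⁻ x, φ x ^ (-(1 / (q - 1))) ∂μ) ^ (-(1 : ℝ) / (1 / (q - 1)))
    ∧ (∀ ρ : X → ℝ≥0∞,
        ρ = (fun x => (∫⁻ y, φ y ^ ((1 : ℝ) / (1 - q)) ∂μ)⁻¹ * φ x ^ ((1 : ℝ) / (1 - q))) →
        ((∫⁻ y, φ y ^ ((1 : ℝ) / (1 - q)) ∂μ ≠ ⊤ → ∫⁻ x, ρ x ∂μ = 1)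
          ∧ ∫⁻ x, φ x * ρ x ^ q ∂μ
              = (∫⁻ x, φ x ^ (-(1 / (q - 1))) ∂μ) ^ (-(1 : ℝ) / (1 / (q - 1))))) := by
  have hq1 : q - 1 ≠ 0 := sub_ne_zero.2 (ne_of_gt hq)
  have hq1' : (0:ℝ) < q - 1 := sub_pos.2 hq
  have hqpos : (0:ℝ) < q := lt_trans one_pos hq
  set l : ℝ := 1 / (q - 1) with hl
  have hlpos : 0 < l := div_pos one_pos hq1'
  have hexp1 : (1:ℝ) / (1 - q) = -l := by
    rw [hl, eq_comm, neg_eq_iff_eq_neg, ← neg_div,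
      div_eq_div_iff hq1 (by intro h; apply hq1; linarith)]; ring
  have hexp2 : (-(1 : ℝ) / l) = 1 - q := by
    rw [hl, div_div_eq_mul_div, div_one]; ring
  have hφml : Measurable fun x => φ x ^ (-l) :=
    ENNReal.continuous_rpow_const.measurable.comp hφm
  set L : ℝ≥0∞ := ∫⁻ x, φ x ^ (-l) ∂μ with hLdef
  have hφl_ne_zero : ∀ x, φ x ^ (-l) ≠ 0 := by
    intro x
    simp [ENNReal.rpow_eq_zero_iff, (hφ x).1, (hφ x).2]
  have hφl_ne_top : ∀ x, φ x ^ (-l) ≠ ⊤ := by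
    intro x
    simp [ENNReal.rpow_eq_top_iff, (hφ x).1, (hφ x).2]
  have hL0 : L ≠ 0 := aux_lintegral_ne_zero μ hμ _ hφml hφl_ne_zero
  -- pointwise computation
  have hpt : ∀ (c : ℝ≥0∞) (x : X), φ x * (c * φ x ^ (-l)) ^ q = c ^ q * φ x ^ (-l) := by
    intro c x
    rw [ENNReal.mul_rpow_of_nonneg _ _ hqpos.le, ← ENNReal.rpow_mul]
    rw [show φ x * (c ^ q * φ x ^ (-l * q)) = c ^ q * (φ x ^ (1:ℝ) * φ x ^ (-l * q)) by
      rw [ENNReal.rpow_one]; ring]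
    rw [← ENNReal.rpow_add _ _ (hφ x).1 (hφ x).2]
    congr 1
    rw [hl]; field_simp; ring_nf
  have hcm : ∀ c : ℝ≥0∞, c ≠ 0 → c ≠ ⊤ → (c⁻¹) ^ q * c = c ^ (1 - q) := by
    intro c hc0 hct
    calc (c⁻¹) ^ q * c = c ^ (-q) * c ^ (1:ℝ) := by
          rw [ENNReal.inv_rpow, ← ENNReal.rpow_neg, ENNReal.rpow_one]
    _ = c ^ (-q + 1) := (ENNReal.rpow_add _ _ hc0 hct).symm
    _ = c ^ (1 - q) := by congr 1; ring
  have hρint : ∀ c : ℝ≥0∞, ∫⁻ x, c * φ x ^ (-l) ∂μ = c * L := fun c =>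
    lintegral_const_mul c hφml
  have hρval : ∫⁻ x, φ x * (L⁻¹ * φ x ^ (-l)) ^ q ∂μ = L ^ (1 - q) := by
    simp only [hpt L⁻¹]
    rw [lintegral_const_mul _ hφml, ← hLdef]
    by_cases hLt : L = ⊤
    · rw [hLt]
      simp [ENNReal.top_rpow_of_neg (by linarith : (1:ℝ) - q < 0),
        ENNReal.zero_rpow_of_pos hqpos]
    · exact hcm L hL0 hLt
  -- lower bound via Hölder
  have hlow : ∀ α : X → ℝ≥0∞, Measurable α → ∫⁻ x, α x ∂μ = 1 →
      L ^ (1 - q) ≤ ∫⁻ x, φ x * α x ^ q ∂μ := by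
    intro α hαm hα1
    by_cases hLt : L = ⊤
    · rw [hLt, ENNReal.top_rpow_of_neg (by linarith : (1:ℝ) - q < 0)]
      exact zero_le
    set A : ℝ≥0∞ := ∫⁻ x, φ x * α x ^ q ∂μ with hA
    have hconj : q.HolderConjugate (q / (q - 1)) := by
      constructor
      · rw [inv_div, inv_one, inv_eq_one_div, ← add_div,
          show (1:ℝ) + (q - 1) = q by ring, div_self (ne_of_gt hqpos)]
      · exact hqpos
      · exact div_pos hqpos hq1'
    have hf : AEMeasurable (fun x => φ x ^ (1/q) * α x) μ :=
      ((ENNReal.continuous_rpow_const.measurable.comp hφm).mul hαm).aemeasurable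
    have hg : AEMeasurable (fun x => φ x ^ (-(1/q))) μ :=
      (ENNReal.continuous_rpow_const.measurable.comp hφm).aemeasurable
    have hHo := ENNReal.lintegral_mul_le_Lp_mul_Lq μ hconj hf hg
    have key : (1:ℝ≥0∞) ≤ A ^ (1/q) * L ^ ((q-1)/q) := by
      calc (1:ℝ≥0∞) = ∫⁻ x, α x ∂μ := hα1.symm
      _ = ∫⁻ a, ((fun x => φ x ^ (1/q) * α x) * fun x => φ x ^ (-(1/q))) a ∂μ := by
          apply lintegral_congr; intro x
          rw [Pi.mul_apply]
          rw [mul_comm (φ x ^ (1/q)) (α x), mul_assoc,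
            ← ENNReal.rpow_add _ _ (hφ x).1 (hφ x).2]
          norm_num
      _ ≤ _ := hHo
      _ = A ^ (1/q) * L ^ ((q-1)/q) := by
          congr 1
          · congr 1
            apply lintegral_congr; intro a
            rw [ENNReal.mul_rpow_of_nonneg _ _ hqpos.le, ← ENNReal.rpow_mul,
              one_div, inv_mul_cancel₀ (ne_of_gt hqpos), ENNReal.rpow_one]
          · rw [show ∫⁻ a, (φ a ^ (-(1/q))) ^ (q/(q-1)) ∂μ = L by
              apply lintegral_congr; intro a
              rw [← ENNReal.rpow_mul]
              congr 1
              rw [hl]; field_simp]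
            congr 1
            rw [one_div, inv_div]
    have hC0 : L ^ ((q-1)/q) ≠ 0 := by
      simp [ENNReal.rpow_eq_zero_iff, hL0, hLt]
    have hCt : L ^ ((q-1)/q) ≠ ⊤ := by
      simp [ENNReal.rpow_eq_top_iff, hL0, hLt]
    have h2 : (L ^ ((q-1)/q))⁻¹ ≤ A ^ (1/q) := by
      calc (L ^ ((q-1)/q))⁻¹ = (L ^ ((q-1)/q))⁻¹ * 1 := (mul_one _).symm
      _ ≤ (L ^ ((q-1)/q))⁻¹ * (A ^ (1/q) * L ^ ((q-1)/q)) := mul_le_mul_right key _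
      _ = A ^ (1/q) * ((L ^ ((q-1)/q))⁻¹ * L ^ ((q-1)/q)) := by ring
      _ = A ^ (1/q) := by rw [ENNReal.inv_mul_cancel hC0 hCt, mul_one]
    have h3 := ENNReal.rpow_le_rpow h2 hqpos.le
    calc L ^ (1-q) = ((L ^ ((q-1)/q))⁻¹) ^ q := by
          rw [ENNReal.inv_rpow, ← ENNReal.rpow_mul,
            div_mul_cancel₀ _ (ne_of_gt hqpos), ← ENNReal.rpow_neg, neg_sub]
    _ ≤ (A ^ (1/q)) ^ q := h3
    _ = A := by
          rw [← ENNReal.rpow_mul, one_div, inv_mul_cancel₀ (ne_of_gt hqpos),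
            ENNReal.rpow_one]
  -- main statement assembly
  have hmain : (⨅ (α : X → ℝ≥0∞) (_ : Measurable α ∧ ∫⁻ x, α x ∂μ = 1),
      ∫⁻ x, φ x * α x ^ q ∂μ) = L ^ (1 - q) := by
    apply le_antisymm
    · -- upper bound
      by_cases hLt : L = ⊤
      · -- L = ⊤ : RHS is 0; use truncations
        rw [hLt, ENNReal.top_rpow_of_neg (by linarith : (1:ℝ) - q < 0)]
        set g : ℕ → X → ℝ≥0∞ := fun n x => min (φ x ^ (-l)) (n + 1) with hg
        have hgm : ∀ n, Measurable (g n) := fun n => hφml.min measurable_const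
        have hgmono : Monotone g := by
          intro n m hnm x
          exact min_le_min le_rfl (add_le_add (Nat.cast_le.2 hnm) le_rfl)
        set M : ℕ → ℝ≥0∞ := fun n => ∫⁻ x, g n x ∂μ with hM
        have hM0 : ∀ n, M n ≠ 0 := by
          intro n
          apply aux_lintegral_ne_zero μ hμ _ (hgm n)
          intro x
          simp only [hg, ne_eq, min_eq_iff, not_or]
          constructor
          · rintro ⟨h1, -⟩; exact hφl_ne_zero x h1
          · rintro ⟨h1, -⟩; simp at h1
        have hMt : ∀ n, M n ≠ ⊤ := by
          intro n
          have : M n ≤ ((n:ℝ≥0∞) + 1) * μ Set.univ := by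
            rw [← lintegral_const]
            exact lintegral_mono fun x => min_le_right _ _
          exact ne_top_of_le_ne_top
            (ENNReal.mul_ne_top (by simp) (measure_ne_top μ _)) this
        have hMsup : ⨆ n, M n = ⊤ := by
          have hsup : ∀ x, ⨆ n, g n x = φ x ^ (-l) := by
            intro x
            apply le_antisymm
            · exact iSup_le fun n => min_le_left _ _
            · obtain ⟨n, hn⟩ := ENNReal.exists_nat_gt (hφl_ne_top x)
              have : g n x = φ x ^ (-l) :=
                min_eq_left (le_trans hn.le (le_add_right le_rfl))
              rw [← this]
              exact le_iSup (fun n => g n x) n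
            
          have h1 : ∫⁻ x, ⨆ n, g n x ∂μ = ⨆ n, M n := lintegral_iSup hgm hgmono
          rw [← h1, show (∫⁻ x, ⨆ n, g n x ∂μ) = L from by
            rw [hLdef]; exact lintegral_congr hsup, hLt]
        -- pointwise bound : φ x * g n x ^ q ≤ g n x
        have hptg : ∀ n x, φ x * g n x ^ q ≤ g n x := by
          intro n x
          have hg0 : g n x ≠ 0 := by
            simp only [hg, ne_eq, min_eq_iff, not_or]
            constructor
            · rintro ⟨h1, -⟩; exact hφl_ne_zero x h1
            · rintro ⟨h1, -⟩; simp at h1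
          have hgt : g n x ≠ ⊤ :=
            ne_top_of_le_ne_top (by simp) (min_le_right _ _)
          have e1 : g n x ^ q = g n x ^ (q - 1) * g n x ^ (1:ℝ) := by
            rw [← ENNReal.rpow_add _ _ hg0 hgt]
            congr 1; ring
          have e2 : g n x ^ (q - 1) ≤ φ x ^ (-(1:ℝ)) := by
            calc g n x ^ (q - 1) ≤ (φ x ^ (-l)) ^ (q - 1) :=
                ENNReal.rpow_le_rpow (min_le_left _ _) hq1'.le
            _ = φ x ^ (-(1:ℝ)) := by
                rw [← ENNReal.rpow_mul]
                congr 1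
                rw [hl]; field_simp
          calc φ x * g n x ^ q = φ x * (g n x ^ (q-1) * g n x) := by
                  rw [e1, ENNReal.rpow_one]
          _ ≤ φ x * (φ x ^ (-(1:ℝ)) * g n x) := by
              exact mul_le_mul_right (mul_le_mul_left e2 _) _
          _ = (φ x ^ (1:ℝ) * φ x ^ (-(1:ℝ))) * g n x := by
              rw [ENNReal.rpow_one]; ring
          _ = g n x := by
              rw [← ENNReal.rpow_add _ _ (hφ x).1 (hφ x).2]
              norm_num
        -- each truncation gives bound (M n)^(1-q)
        have hbound : ∀ n, (⨅ (α : X → ℝ≥0∞) (_ : Measurable α ∧ ∫⁻ x, α x ∂μ = 1),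
            ∫⁻ x, φ x * α x ^ q ∂μ) ≤ (M n) ^ (1 - q) := by
          intro n
          have hαm : Measurable fun x => (M n)⁻¹ * g n x :=
            (hgm n).const_mul _
          have hα1 : ∫⁻ x, (M n)⁻¹ * g n x ∂μ = 1 := by
            rw [lintegral_const_mul _ (hgm n)]
            exact ENNReal.inv_mul_cancel (hM0 n) (hMt n)
          refine le_trans (iInf₂_le _ ⟨hαm, hα1⟩) ?_
          have hval : ∀ x, φ x * ((M n)⁻¹ * g n x) ^ q
              = ((M n)⁻¹) ^ q * (φ x * g n x ^ q) := by
            intro x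
            rw [ENNReal.mul_rpow_of_nonneg _ _ hqpos.le]; ring
          calc ∫⁻ x, φ x * ((M n)⁻¹ * g n x) ^ q ∂μ
              = ∫⁻ x, ((M n)⁻¹) ^ q * (φ x * g n x ^ q) ∂μ := lintegral_congr hval
          _ = ((M n)⁻¹) ^ q * ∫⁻ x, φ x * g n x ^ q ∂μ :=
                lintegral_const_mul _
                  (hφm.mul (ENNReal.continuous_rpow_const.measurable.comp (hgm n)))
          _ ≤ ((M n)⁻¹) ^ q * ∫⁻ x, g n x ∂μ :=
                mul_le_mul_right (lintegral_mono fun x => hptg n x) _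
          _ = ((M n)⁻¹) ^ q * M n := rfl
          _ = (M n) ^ (1 - q) := hcm (M n) (hM0 n) (hMt n)
        -- conclude : infimum ≤ ⨅ n, (M n)^(1-q) = 0
        have hiZero : (⨅ n, (M n) ^ (1 - q)) = 0 := by
          by_contra hb
          set b := ⨅ n, (M n) ^ (1 - q) with hbdef
          have hb0 : b ≠ 0 := hb
          have hub : ∀ n, M n ≤ (b⁻¹) ^ l := by
            intro n
            have h1 : b ≤ (M n) ^ (1 - q) := iInf_le _ n
            have h2 : (M n) ^ (q - 1) ≤ b⁻¹ := by
              have : (M n) ^ (1 - q) = ((M n) ^ (q-1))⁻¹ := by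
                rw [← ENNReal.rpow_neg, neg_sub]
              rw [this] at h1
              calc (M n) ^ (q-1) = (((M n) ^ (q-1))⁻¹)⁻¹ := (inv_inv _).symm
              _ ≤ b⁻¹ := ENNReal.inv_le_inv.2 h1
            calc M n = ((M n) ^ (q-1)) ^ l := by
                  rw [← ENNReal.rpow_mul, hl, mul_one_div,
                    div_self hq1, ENNReal.rpow_one]
            _ ≤ (b⁻¹) ^ l := ENNReal.rpow_le_rpow h2 hlpos.le
          have : (⊤:ℝ≥0∞) ≤ (b⁻¹) ^ l := hMsup ▸ iSup_le hub
          have htop : (b⁻¹) ^ l = ⊤ := top_le_iff.1 this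
          rw [ENNReal.rpow_eq_top_iff] at htop
          rcases htop with ⟨h1, h2⟩ | ⟨h1, -⟩
          · exact absurd h2 (not_lt.2 hlpos.le)
          · exact hb0 (ENNReal.inv_eq_top.1 h1)
        calc (⨅ (α : X → ℝ≥0∞) (_ : Measurable α ∧ ∫⁻ x, α x ∂μ = 1),
            ∫⁻ x, φ x * α x ^ q ∂μ) ≤ ⨅ n, (M n) ^ (1 - q) := le_iInf hbound
        _ = 0 := hiZero
      · -- L finite: use the explicit minimizer
        have hαm : Measurable fun x => L⁻¹ * φ x ^ (-l) := hφml.const_mul _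
        have hα1 : ∫⁻ x, L⁻¹ * φ x ^ (-l) ∂μ = 1 := by
          rw [hρint, ENNReal.inv_mul_cancel hL0 hLt]
        exact le_trans (iInf₂_le _ ⟨hαm, hα1⟩) hρval.le
    · exact le_iInf fun α => le_iInf fun hα => hlow α hα.1 hα.2
  constructor
  · rw [hmain]
    congr 1
    · rw [hexp2]
  · intro ρ hρ
    subst hρ
    simp only [hexp1]
    constructor
    · intro hLt
      rw [hρint, ENNReal.inv_mul_cancel hL0 hLt]
    · rw [hρval]
      congr 1
      rw [hexp2]
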